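/- Let $(C,D)$ be an inclusion, let $v \in N(C,D)$ be a normalizer, and let $\sigma$ be a character of $D$ such that $\sigma(v^*v) \neq 0$ and $\beta_v(\sigma) \neq \sigma$, i.e., there exists $d \in D$ with $\sigma(v^* d v) \neq \sigma(v^*v)\,\sigma(d)$. Then every state $\rho$ on $C$ whose restriction to $D$ equals $\sigma$ satisfies $\rho(v) = 0$. -/

import Mathlib

open scoped ComplexOrder

/-- `v` is a normalizer of the subset `S`:  `v* S v ⊆ S` and `v S v* ⊆ S`. -/
def IsNormalizer {C : Type*} [Mul C] [Star C] (S : Set C) (v : C) : Prop :=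
  ∀ d ∈ S, star v * d * v ∈ S ∧ v * d * star v ∈ S

set_option linter.unusedSectionVars false
section Aux

variable {C : Type*} [NormedRing C] [StarRing C] [CStarRing C] [NormedAlgebra ℂ C]
    [CompleteSpace C] [StarModule ℂ C]
    (ρ : C →ₗ[ℂ] ℂ)

theorem state_hermitian' (hρpos : ∀ x : C, 0 ≤ ρ (star x * x)) :
    ∀ a b : C, ρ (star b * a) = starRingEnd ℂ (ρ (star a * b)) := by
  have him : ∀ x : C, (ρ (star x * x)).im = 0 := by
    intro x
    have := hρpos x
    rw [Complex.le_def] at this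
    simpa using this.2.symm
  intro a b
  have h1 : (ρ (star a * b) + ρ (star b * a)).im = 0 := by
    have := him (a + b)
    simp only [star_add, add_mul, mul_add, map_add, Complex.add_im] at this ⊢
    have ha := him a
    have hb := him b
    linarith
  have h2 : (Complex.I * (ρ (star a * b) - ρ (star b * a))).im = 0 := by
    have := him (a + Complex.I • b)
    simp only [star_add, star_smul, add_mul, mul_add, map_add, map_smul,
      smul_mul_assoc, mul_smul_comm, smul_eq_mul, Complex.add_im, Complex.mul_im,
      Complex.conj_im, Complex.conj_re, Complex.I_re, Complex.I_im, Complex.star_def,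
      Complex.conj_I, Complex.neg_re, Complex.neg_im, Complex.sub_im,
      Complex.sub_re, map_mul, Complex.mul_re] at this ⊢
    have ha := him a
    have hb := him b
    ring_nf at this ⊢
    nlinarith [this, ha, hb]
  apply Complex.ext
  · have := h2
    simp [Complex.mul_im, Complex.sub_re, Complex.sub_im] at this
    simp [Complex.conj_re]
    linarith
  · have := h1
    simp [Complex.add_im] at this
    simp [Complex.conj_im]
    linarith

theorem state_null' (hρpos : ∀ x : C, 0 ≤ ρ (star x * x)) :
    ∀ y : C, ρ (star y * y) = 0 → ∀ x : C, ρ (star x * y) = 0 := by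
  intro y hy x
  set c := ρ (star x * y) with hc
  by_contra hne
  -- f(s) = ρ (star (x + t•y) * (x + t•y)) with t = -s * conj c
  have key : ∀ s : ℝ, (0:ℂ) ≤ ρ (star x * x) - (2 * s * Complex.normSq c : ℝ) := by
    intro s
    have := hρpos (x + ((-s : ℂ) * starRingEnd ℂ c) • y)
    set t : ℂ := (-s : ℂ) * starRingEnd ℂ c with ht
    have herm : ρ (star y * x) = starRingEnd ℂ c := by
      rw [hc]; exact state_hermitian' ρ hρpos x y
    have expand : ρ (star (x + t • y) * (x + t • y))
        = ρ (star x * x) + starRingEnd ℂ t * ρ (star y * x) + t * ρ (star x * y)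
          + starRingEnd ℂ t * t * ρ (star y * y) := by
      simp only [star_add, star_smul, add_mul, mul_add, map_add, map_smul,
        smul_mul_assoc, mul_smul_comm, smul_eq_mul, Complex.star_def]
      ring
    rw [expand, hy, herm, ← hc] at this
    have hfin : ρ (star x * x) + (starRingEnd ℂ) t * (starRingEnd ℂ) c + t * c
        + (starRingEnd ℂ) t * t * 0
        = ρ (star x * x) - ((2 * s * Complex.normSq c : ℝ) : ℂ) := by
      rw [ht]
      push_cast
      simp only [map_mul, map_neg, Complex.conj_conj, Complex.conj_ofReal]
      rw [← Complex.mul_conj c]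
      ring
    rw [hfin] at this
    exact this
  have hcpos : 0 < Complex.normSq c := by
    rcases lt_or_eq_of_le (Complex.normSq_nonneg c) with h | h
    · exact h
    · exact absurd (Complex.normSq_eq_zero.mp h.symm) hne
  -- pick s large
  set s : ℝ := ((ρ (star x * x)).re + 1) / (2 * Complex.normSq c) with hs
  have := key s
  rw [Complex.le_def] at this
  have hre := this.1
  simp only [Complex.sub_re, Complex.ofReal_re, Complex.zero_re] at hre
  rw [hs] at hre
  have h2 : 2 * (((ρ (star x * x)).re + 1) / (2 * Complex.normSq c)) * Complex.normSq c
      = (ρ (star x * x)).re + 1 := by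
    field_simp
  rw [h2] at hre
  linarith

end Aux

/-- Let `(C,D)` be an inclusion, `v ∈ N(C,D)` a normalizer, and `σ` a character of `D` with
`σ(v*v) ≠ 0` and `β_v(σ) ≠ σ` (i.e. there is `d ∈ D` with `σ(v* d v) ≠ σ(v*v) σ(d)`).  Then
every state `ρ` on `C` restricting to `σ` on `D` satisfies `ρ(v) = 0`. -/
theorem state_vanishes_on_moved_normalizer
    {C : Type*} [NormedRing C] [StarRing C] [CStarRing C] [NormedAlgebra ℂ C]
    [CompleteSpace C] [StarModule ℂ C]
    (D : StarSubalgebra ℂ C) (hDclosed : IsClosed (D : Set C))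
    (hDcomm : ∀ a ∈ D, ∀ b ∈ D, a * b = b * a)
    (v : C) (hv : IsNormalizer (D : Set C) v)
    -- `σ` is a character of `D` (encoded as a function on `C`, constrained only on `D`)
    (σ : C → ℂ)
    (hσadd : ∀ a ∈ D, ∀ b ∈ D, σ (a + b) = σ a + σ b)
    (hσsmul : ∀ (c : ℂ), ∀ a ∈ D, σ (c • a) = c * σ a)
    (hσmul : ∀ a ∈ D, ∀ b ∈ D, σ (a * b) = σ a * σ b)
    (hσ1 : σ 1 = 1)
    (hσvv : σ (star v * v) ≠ 0)
    (hmoved : ∃ d ∈ D, σ (star v * d * v) ≠ σ (star v * v) * σ d)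
    -- `ρ` is a state on `C` extending `σ`
    (ρ : C →ₗ[ℂ] ℂ) (hρ1 : ρ 1 = 1) (hρpos : ∀ x : C, 0 ≤ ρ (star x * x))
    (hρext : ∀ d ∈ D, ρ d = σ d) :
    ρ v = 0 := by
  classical
  have hstar : ∀ w : C, ρ (star w) = starRingEnd ℂ (ρ w) := by
    intro w
    have := state_hermitian' ρ hρpos 1 w
    simpa using this
  -- right multiplication by elements of D
  have hnull : ∀ d ∈ D, σ d = 0 → (∀ z : C, ρ (z * d) = 0) ∧ (∀ z : C, ρ (d * z) = 0) := by
    intro d hdD hσd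
    have hsdD : star d ∈ D := star_mem hdD
    constructor
    · intro z
      have h0 : ρ (star d * d) = 0 := by
        rw [hρext _ (D.mul_mem hsdD hdD), hσmul _ hsdD _ hdD, hσd, mul_zero]
      have := state_null' ρ hρpos d h0 (star z)
      rwa [star_star] at this
    · intro z
      have h0 : ρ (star (star d) * star d) = 0 := by
        rw [star_star, hρext _ (D.mul_mem hdD hsdD), hσmul _ hdD _ hsdD, hσd, zero_mul]
      have h1 := state_null' ρ hρpos (star d) h0 z
      have h2 : ρ (star (star z * star d)) = 0 := by rw [hstar, h1, map_zero]
      rwa [star_mul, star_star, star_star] at h2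
  have hrmul : ∀ d ∈ D, ∀ z : C, ρ (z * d) = σ d * ρ z := by
    intro d hdD z
    set d' : C := d + (-(σ d)) • 1 with hd'
    have hd'D : d' ∈ D := D.add_mem hdD (SMulMemClass.smul_mem _ D.one_mem)
    have hσd' : σ d' = 0 := by
      rw [hd', hσadd _ hdD _ (SMulMemClass.smul_mem _ D.one_mem),
        hσsmul _ _ D.one_mem, hσ1]
      ring
    have h0 := (hnull d' hd'D hσd').1 z
    have hexp : z * d' = z * d + (-(σ d)) • z := by
      rw [hd', mul_add, mul_smul_comm, mul_one]
    rw [hexp, map_add, map_smul, smul_eq_mul] at h0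
    linear_combination h0
  have hlmul : ∀ d ∈ D, ∀ z : C, ρ (d * z) = σ d * ρ z := by
    intro d hdD z
    set d' : C := d + (-(σ d)) • 1 with hd'
    have hd'D : d' ∈ D := D.add_mem hdD (SMulMemClass.smul_mem _ D.one_mem)
    have hσd' : σ d' = 0 := by
      rw [hd', hσadd _ hdD _ (SMulMemClass.smul_mem _ D.one_mem),
        hσsmul _ _ D.one_mem, hσ1]
      ring
    have h0 := (hnull d' hd'D hσd').2 z
    have hexp : d' * z = d * z + (-(σ d)) • z := by
      rw [hd', add_mul, smul_mul_assoc, one_mul]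
    rw [hexp, map_add, map_smul, smul_eq_mul] at h0
    linear_combination h0
  -- membership facts
  have hvvD : star v * v ∈ D := by
    have := (hv 1 D.one_mem).1
    rwa [mul_one] at this
  have hvv'D : v * star v ∈ D := by
    have := (hv 1 D.one_mem).2
    rwa [mul_one] at this
  by_contra hρv
  obtain ⟨d, hdD, hd⟩ := hmoved
  -- σ(v v*) = σ(v* v)
  have e1 : σ (star v * v) * ρ v = σ (v * star v) * ρ v := by
    have a1 := hrmul _ hvvD v
    have a2 := hlmul _ hvv'D v
    rw [← a1, ← a2, ← mul_assoc]
  have hσsym : σ (v * star v) = σ (star v * v) := (mul_right_cancel₀ hρv e1).symm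
  -- main computation
  have hvdvD : star v * d * v ∈ D := (hv d hdD).1
  have e2 : σ (star v * d * v) * ρ v = σ (star v * v) * σ d * ρ v := by
    have a1 := hrmul _ hvdvD v
    have a2 := hlmul _ (D.mul_mem hvv'D hdD) v
    rw [hσmul _ hvv'D _ hdD, hσsym] at a2
    rw [← a1, ← a2]
    congr 1
    noncomm_ring
  exact hd (mul_right_cancel₀ hρv e2)
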